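/- Under the true-model assumption, any maximizer θ̄ of the population ranking objective L_R^∞ satisfies exp(s(x,y;θ̄))/Z(x;θ̄) = p(y|x) for all x, y; that is, the ranking NCE population objective identifies the true conditional distribution. -/

import Mathlib

open Finset

private lemma gibbs_ineq {n : ℕ} (hn : 0 < n) (f g : Fin n → ℝ)
    (hf : ∀ k, 0 < f k) (hg : ∀ k, 0 < g k) :
    ((∑ k, g k * Real.log (f k / ∑ j, f j)) ≤ ∑ k, g k * Real.log (g k / ∑ j, g j)) ∧
    ((∑ k, g k * Real.log (f k / ∑ j, f j)) = (∑ k, g k * Real.log (g k / ∑ j, g j)) →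
      ∀ k, f k * (∑ j, g j) = g k * (∑ j, f j)) := by
  have hne : Nonempty (Fin n) := ⟨⟨0, hn⟩⟩
  have hF0 : 0 < ∑ j, f j := Finset.sum_pos (fun i _ => hf i) univ_nonempty
  have hG0 : 0 < ∑ j, g j := Finset.sum_pos (fun i _ => hg i) univ_nonempty
  set F := ∑ j, f j with hFdef
  set G := ∑ j, g j with hGdef
  set t : Fin n → ℝ := fun k => f k * G / (g k * F) with htdef
  have ht0 : ∀ k, 0 < t k := fun k => div_pos (mul_pos (hf k) hG0) (mul_pos (hg k) hF0)
  set D : Fin n → ℝ := fun k => g k * ((t k - 1) - Real.log (t k)) with hDdef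
  have hDnn : ∀ k, 0 ≤ D k := fun k =>
    mul_nonneg (hg k).le (sub_nonneg.2 (Real.log_le_sub_one_of_pos (ht0 k)))
  have hsum0 : ∑ k, g k * (t k - 1) = 0 := by
    have h1 : ∀ k, g k * (t k - 1) = f k * (G / F) - g k := by
      intro k
      have hgk := (hg k).ne'
      have hFk := hF0.ne'
      field_simp [htdef]
      simp only [htdef]; field_simp
    rw [Finset.sum_congr rfl fun k _ => h1 k, Finset.sum_sub_distrib, ← Finset.sum_mul]
    rw [← hFdef, ← hGdef]
    field_simp
    ring
  have hkey : (∑ k, g k * Real.log (g k / G)) - (∑ k, g k * Real.log (f k / F)) = ∑ k, D k := by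
    have hterm : ∀ k, g k * Real.log (g k / G) - g k * Real.log (f k / F)
        = D k - g k * (t k - 1) := by
      intro k
      have hlt : Real.log (t k) = Real.log (f k / F) - Real.log (g k / G) := by
        simp only [htdef]
        rw [show f k * G / (g k * F) = (f k / F) / (g k / G) by
          field_simp]
        rw [Real.log_div (div_pos (hf k) hF0).ne' (div_pos (hg k) hG0).ne']
      rw [hDdef]
      simp only
      rw [hlt]; ring
    rw [← Finset.sum_sub_distrib, Finset.sum_congr rfl fun k _ => hterm k,
      Finset.sum_sub_distrib, hsum0, sub_zero]
  constructor
  · have : 0 ≤ ∑ k, D k := Finset.sum_nonneg fun k _ => hDnn k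
    linarith
  · intro heq k
    have hDzero : ∀ i ∈ univ, D i = 0 := by
      rw [← Finset.sum_eq_zero_iff_of_nonneg fun i _ => hDnn i]
      linarith
    have hDk := hDzero k (mem_univ k)
    have hlog1 : Real.log (t k) = t k - 1 := by
      rw [hDdef] at hDk
      simp only at hDk
      rcases mul_eq_zero.1 hDk with h | h
      · exact absurd h (hg k).ne'
      · linarith
    have ht1 : t k = 1 := by
      by_contra hne1
      exact absurd hlog1 (ne_of_lt (Real.log_lt_sub_one_of_pos (ht0 k) hne1))
    have := (div_eq_one_iff_eq (mul_pos (hg k) hF0).ne').1 ht1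
    linarith [this]

private lemma sum_swap_idx {Y : Type} [Fintype Y] {n : ℕ} (p q h : Y → ℝ) (a b : Fin n) :
    (∑ ys : Fin n → Y, (∏ j, p (ys j)) * (q (ys a) * Real.log (h (ys a) / ∑ j, h (ys j))))
    = ∑ ys : Fin n → Y, (∏ j, p (ys j)) * (q (ys b) * Real.log (h (ys b) / ∑ j, h (ys j))) := by
  have hinv : Function.Involutive (fun ys : Fin n → Y => ys ∘ Equiv.swap a b) := by
    intro ys; funext j
    simp [Function.comp, Equiv.swap_apply_self]
  refine Fintype.sum_bijective _ hinv.bijective _ _ fun ys => ?_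
  simp only [Function.comp_apply]
  rw [Equiv.swap_apply_right]
  rw [Equiv.prod_comp (Equiv.swap a b) fun j => p (ys j)]
  rw [Equiv.sum_comp (Equiv.swap a b) fun j => h (ys j)]

private lemma perx {Y : Type} [Fintype Y] (K : ℕ) (pN : Y → ℝ) (hpN : ∀ y, 0 < pN y)
    (f g : Y → ℝ) (hf : ∀ y, 0 < f y) (hg : ∀ y, 0 < g y) :
    ((∑ ys : Fin (K+1) → Y, (∏ j, pN (ys j)) * (g (ys 0) * Real.log (f (ys 0) / ∑ k, f (ys k)))) ≤
      ∑ ys : Fin (K+1) → Y, (∏ j, pN (ys j)) * (g (ys 0) * Real.log (g (ys 0) / ∑ k, g (ys k)))) ∧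
    ((∑ ys : Fin (K+1) → Y, (∏ j, pN (ys j)) * (g (ys 0) * Real.log (f (ys 0) / ∑ k, f (ys k)))) =
      (∑ ys : Fin (K+1) → Y, (∏ j, pN (ys j)) * (g (ys 0) * Real.log (g (ys 0) / ∑ k, g (ys k)))) →
      ∀ ys : Fin (K+1) → Y, ∀ k, f (ys k) * (∑ j, g (ys j)) = g (ys k) * (∑ j, f (ys j))) := by
  have hn : 0 < K + 1 := Nat.succ_pos K
  -- symmetrized form
  have hsym : ∀ h : Y → ℝ,
      ((K : ℝ) + 1) * (∑ ys : Fin (K+1) → Y,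
          (∏ j, pN (ys j)) * (g (ys 0) * Real.log (h (ys 0) / ∑ k, h (ys k))))
      = ∑ ys : Fin (K+1) → Y, (∏ j, pN (ys j)) *
          (∑ k, g (ys k) * Real.log (h (ys k) / ∑ j, h (ys j))) := by
    intro h
    have h1 : ∀ k : Fin (K+1),
        (∑ ys : Fin (K+1) → Y, (∏ j, pN (ys j)) * (g (ys k) * Real.log (h (ys k) / ∑ j, h (ys j))))
        = ∑ ys : Fin (K+1) → Y, (∏ j, pN (ys j)) * (g (ys 0) * Real.log (h (ys 0) / ∑ j, h (ys j))) :=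
      fun k => sum_swap_idx pN g h k 0
    calc ((K : ℝ) + 1) * (∑ ys : Fin (K+1) → Y,
            (∏ j, pN (ys j)) * (g (ys 0) * Real.log (h (ys 0) / ∑ k, h (ys k))))
        = ∑ k : Fin (K+1), ∑ ys : Fin (K+1) → Y,
            (∏ j, pN (ys j)) * (g (ys k) * Real.log (h (ys k) / ∑ j, h (ys j))) := by
          rw [Finset.sum_congr rfl fun k _ => h1 k, Finset.sum_const, Finset.card_univ,
            Fintype.card_fin, nsmul_eq_mul]
          push_cast
          ring
      _ = ∑ ys : Fin (K+1) → Y, ∑ k : Fin (K+1),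
            (∏ j, pN (ys j)) * (g (ys k) * Real.log (h (ys k) / ∑ j, h (ys j))) :=
          Finset.sum_comm
      _ = ∑ ys : Fin (K+1) → Y, (∏ j, pN (ys j)) *
            (∑ k, g (ys k) * Real.log (h (ys k) / ∑ j, h (ys j))) := by
          refine Finset.sum_congr rfl fun ys _ => ?_
          rw [Finset.mul_sum]
  have hprodpos : ∀ ys : Fin (K+1) → Y, 0 < ∏ j, pN (ys j) :=
    fun ys => Finset.prod_pos fun j _ => hpN (ys j)
  have hgibbs := fun ys : Fin (K+1) → Y =>
    gibbs_ineq hn (fun k => f (ys k)) (fun k => g (ys k)) (fun k => hf _) (fun k => hg _)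
  have hTle : (∑ ys : Fin (K+1) → Y, (∏ j, pN (ys j)) *
        (∑ k, g (ys k) * Real.log (f (ys k) / ∑ j, f (ys j))))
      ≤ ∑ ys : Fin (K+1) → Y, (∏ j, pN (ys j)) *
        (∑ k, g (ys k) * Real.log (g (ys k) / ∑ j, g (ys j))) :=
    Finset.sum_le_sum fun ys _ =>
      mul_le_mul_of_nonneg_left (hgibbs ys).1 (hprodpos ys).le
  have hKpos : (0 : ℝ) < (K : ℝ) + 1 := by positivity
  constructor
  · have := hTle
    rw [← hsym f, ← hsym g] at this
    exact le_of_mul_le_mul_left this hKpos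
  · intro heq ys0 k0
    have hTeq : (∑ ys : Fin (K+1) → Y, (∏ j, pN (ys j)) *
          (∑ k, g (ys k) * Real.log (f (ys k) / ∑ j, f (ys j))))
        = ∑ ys : Fin (K+1) → Y, (∏ j, pN (ys j)) *
          (∑ k, g (ys k) * Real.log (g (ys k) / ∑ j, g (ys j))) := by
      rw [← hsym f, ← hsym g, heq]
    have hzero : ∀ ys ∈ (univ : Finset (Fin (K+1) → Y)),
        (∏ j, pN (ys j)) * ((∑ k, g (ys k) * Real.log (g (ys k) / ∑ j, g (ys j)))
          - (∑ k, g (ys k) * Real.log (f (ys k) / ∑ j, f (ys j)))) = 0 := by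
      rw [← Finset.sum_eq_zero_iff_of_nonneg fun ys _ =>
        mul_nonneg (hprodpos ys).le (sub_nonneg.2 (hgibbs ys).1)]
      rw [Finset.sum_congr rfl fun ys _ => mul_sub (∏ j, pN (ys j)) _ _,
        Finset.sum_sub_distrib, hTeq, sub_self]
    have h0 := hzero ys0 (mem_univ ys0)
    rcases mul_eq_zero.1 h0 with h | h
    · exact absurd h (hprodpos ys0).ne'
    · exact (hgibbs ys0).2 (by linarith) k0

/-- Under the true-model assumption, any maximizer `θ̄` of the population ranking
objective recovers the true conditional distribution:
`exp(s(x,y;θ̄))/Z(x;θ̄) = p(y|x)` for all `x, y`. -/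
theorem ranking_objective_maximizer_consistent (X Y : Type) [Fintype X] [Fintype Y]
    (K : ℕ) (hK : 1 ≤ K)
    (Θ : Type) (θs : Θ)
    (pX : X → ℝ) (hpX : ∀ x, 0 < pX x) (hpXsum : ∑ x, pX x = 1)
    (pN : Y → ℝ) (hpN : ∀ y, 0 < pN y) (hpNsum : ∑ y, pN y = 1)
    (s : X → Y → Θ → ℝ)
    (pXY : X → Y → ℝ)
    (hmodel : ∀ x y, pXY x y
      = pX x * (Real.exp (s x y θs) / ∑ y', Real.exp (s x y' θs)))
    (sb : X → Y → Θ → ℝ) (hsb : ∀ x y θ, sb x y θ = s x y θ - Real.log (pN y))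
    (L : Θ → ℝ)
    (hL : ∀ θ, L θ = ∑ x, ∑ ys : Fin (K + 1) → Y,
      (pXY x (ys 0) * ∏ j ∈ Finset.univ.erase 0, pN (ys j)) *
        Real.log (Real.exp (sb x (ys 0) θ) / ∑ k, Real.exp (sb x (ys k) θ)))
    (θb : Θ) (hmax : ∀ θ, L θ ≤ L θb) :
    ∀ x y, Real.exp (s x y θb) / (∑ y', Real.exp (s x y' θb))
      = Real.exp (s x y θs) / (∑ y', Real.exp (s x y' θs)) := by
  intro x0 y0
  have hY : Nonempty Y := ⟨y0⟩
  have hZ : ∀ x : X, (0:ℝ) < ∑ y', Real.exp (s x y' θs) :=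
    fun x => Finset.sum_pos (fun _ _ => Real.exp_pos _) univ_nonempty
  have hc : ∀ x : X, 0 < pX x / ∑ y', Real.exp (s x y' θs) :=
    fun x => div_pos (hpX x) (hZ x)
  -- factorization of L
  have hfact : ∀ θ, L θ = ∑ x, (pX x / ∑ y', Real.exp (s x y' θs)) *
      (∑ ys : Fin (K+1) → Y, (∏ j, pN (ys j)) *
        (Real.exp (sb x (ys 0) θs) *
          Real.log (Real.exp (sb x (ys 0) θ) / ∑ k, Real.exp (sb x (ys k) θ)))) := by
    intro θ
    rw [hL θ]
    refine Finset.sum_congr rfl fun x _ => ?_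
    rw [Finset.mul_sum]
    refine Finset.sum_congr rfl fun ys _ => ?_
    have hprod : pN (ys 0) * ∏ j ∈ univ.erase 0, pN (ys j) = ∏ j, pN (ys j) :=
      Finset.mul_prod_erase univ (fun j => pN (ys j)) (mem_univ (0 : Fin (K+1)))
    have hpxy : pXY x (ys 0) = (pX x / ∑ y', Real.exp (s x y' θs)) *
        (Real.exp (sb x (ys 0) θs) * pN (ys 0)) := by
      rw [hmodel, hsb, Real.exp_sub, Real.exp_log (hpN _)]
      have h1 : (∑ y', Real.exp (s x y' θs)) ≠ 0 := (hZ x).ne'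
      have h2 : pN (ys 0) ≠ 0 := (hpN (ys 0)).ne'
      field_simp
    rw [hpxy, ← hprod]
    ring
  -- apply per-x lemma
  have hperx := fun (x : X) (θ : Θ) => perx K pN hpN
    (fun y => Real.exp (sb x y θ)) (fun y => Real.exp (sb x y θs))
    (fun y => Real.exp_pos _) (fun y => Real.exp_pos _)
  have hle : ∀ x ∈ (univ : Finset X), (pX x / ∑ y', Real.exp (s x y' θs)) *
      (∑ ys : Fin (K+1) → Y, (∏ j, pN (ys j)) *
        (Real.exp (sb x (ys 0) θs) *
          Real.log (Real.exp (sb x (ys 0) θb) / ∑ k, Real.exp (sb x (ys k) θb))))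
      ≤ (pX x / ∑ y', Real.exp (s x y' θs)) *
      (∑ ys : Fin (K+1) → Y, (∏ j, pN (ys j)) *
        (Real.exp (sb x (ys 0) θs) *
          Real.log (Real.exp (sb x (ys 0) θs) / ∑ k, Real.exp (sb x (ys k) θs)))) :=
    fun x _ => mul_le_mul_of_nonneg_left (hperx x θb).1 (hc x).le
  have hLeq : L θb = L θs := by
    have h1 : L θs ≤ L θb := hmax θs
    have h2 : L θb ≤ L θs := by
      rw [hfact θb, hfact θs]
      exact Finset.sum_le_sum hle
    linarith
  -- extract per-x equality at x0
  have hsumeq : ∀ x ∈ (univ : Finset X), (pX x / ∑ y', Real.exp (s x y' θs)) *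
      (∑ ys : Fin (K+1) → Y, (∏ j, pN (ys j)) *
        (Real.exp (sb x (ys 0) θs) *
          Real.log (Real.exp (sb x (ys 0) θb) / ∑ k, Real.exp (sb x (ys k) θb))))
      = (pX x / ∑ y', Real.exp (s x y' θs)) *
      (∑ ys : Fin (K+1) → Y, (∏ j, pN (ys j)) *
        (Real.exp (sb x (ys 0) θs) *
          Real.log (Real.exp (sb x (ys 0) θs) / ∑ k, Real.exp (sb x (ys k) θs)))) := by
    rw [← Finset.sum_eq_sum_iff_of_le hle]
    rw [← hfact θb, ← hfact θs, hLeq]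
  have hSx : (∑ ys : Fin (K+1) → Y, (∏ j, pN (ys j)) *
        (Real.exp (sb x0 (ys 0) θs) *
          Real.log (Real.exp (sb x0 (ys 0) θb) / ∑ k, Real.exp (sb x0 (ys k) θb))))
      = ∑ ys : Fin (K+1) → Y, (∏ j, pN (ys j)) *
        (Real.exp (sb x0 (ys 0) θs) *
          Real.log (Real.exp (sb x0 (ys 0) θs) / ∑ k, Real.exp (sb x0 (ys k) θs))) :=
    mul_left_cancel₀ (hc x0).ne' (hsumeq x0 (mem_univ x0))
  have hratio : ∀ y y' : Y, Real.exp (sb x0 y θb) * Real.exp (sb x0 y' θs)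
      = Real.exp (sb x0 y θs) * Real.exp (sb x0 y' θb) := by
    intro y y'
    have hext := (hperx x0 θb).2 hSx
    set ys : Fin (K+1) → Y := fun j => if j = 0 then y else y' with hysdef
    have hys0 : ys 0 = y := by simp [hysdef]
    have hk1 : ((⟨1, by omega⟩ : Fin (K+1))) ≠ 0 := by
      intro h
      have := Fin.mk.injEq 1 (by omega : 1 < K + 1) 0 (by omega) ▸ h
      simp [Fin.ext_iff] at h
    have hys1 : ys ⟨1, by omega⟩ = y' := by simp [hysdef, hk1]
    have eq1 := hext ys 0
    have eq2 := hext ys ⟨1, by omega⟩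
    rw [hys0] at eq1
    rw [hys1] at eq2
    have hGpos : 0 < ∑ j, Real.exp (sb x0 (ys j) θs) :=
      Finset.sum_pos (fun _ _ => Real.exp_pos _) univ_nonempty
    have key : Real.exp (sb x0 y θb) * Real.exp (sb x0 y' θs) * (∑ j, Real.exp (sb x0 (ys j) θs))
        = Real.exp (sb x0 y θs) * Real.exp (sb x0 y' θb) * (∑ j, Real.exp (sb x0 (ys j) θs)) := by
      calc Real.exp (sb x0 y θb) * Real.exp (sb x0 y' θs) * (∑ j, Real.exp (sb x0 (ys j) θs))
          = Real.exp (sb x0 y' θs) *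
              (Real.exp (sb x0 y θb) * ∑ j, Real.exp (sb x0 (ys j) θs)) := by ring
        _ = Real.exp (sb x0 y' θs) *
              (Real.exp (sb x0 y θs) * ∑ j, Real.exp (sb x0 (ys j) θb)) := by rw [eq1]
        _ = Real.exp (sb x0 y θs) *
              (Real.exp (sb x0 y' θs) * ∑ j, Real.exp (sb x0 (ys j) θb)) := by ring
        _ = Real.exp (sb x0 y θs) *
              (Real.exp (sb x0 y' θb) * ∑ j, Real.exp (sb x0 (ys j) θs)) := by rw [← eq2]
        _ = Real.exp (sb x0 y θs) * Real.exp (sb x0 y' θb) *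
              (∑ j, Real.exp (sb x0 (ys j) θs)) := by ring
    exact mul_right_cancel₀ hGpos.ne' key
  -- convert to the s-scale ratio
  have hratio' : ∀ y y' : Y, Real.exp (s x0 y θb) * Real.exp (s x0 y' θs)
      = Real.exp (s x0 y θs) * Real.exp (s x0 y' θb) := by
    intro y y'
    have := hratio y y'
    rw [hsb, hsb, hsb, hsb, Real.exp_sub, Real.exp_sub, Real.exp_sub, Real.exp_sub,
      Real.exp_log (hpN y), Real.exp_log (hpN y')] at this
    have hpy := (hpN y).ne'
    have hpy' := (hpN y').ne'
    field_simp at this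
    linarith
  have hZb : (0:ℝ) < ∑ y', Real.exp (s x0 y' θb) :=
    Finset.sum_pos (fun _ _ => Real.exp_pos _) univ_nonempty
  rw [div_eq_div_iff hZb.ne' (hZ x0).ne']
  rw [Finset.mul_sum, Finset.mul_sum]
  exact Finset.sum_congr rfl fun y' _ => hratio' y0 y'
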